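/- Under the setting and covariance hypothesis of the preceding coefficient lemma (centered square-integrable Z_t : Ω → H with E[⟨Z_t, u⟩⟨Z_s, v⟩] = ∑_n B_n(|t−s|) ∑_{j=1}^{Γ(n)} ⟨u, e_{n,j}⟩⟨v, e_{n,j}⟩), assume additionally the trace condition ∑_n Γ(n) B_n(0) < ∞. Then for every t ∈ [0,T] and every N ∈ ℕ, E[ ‖ Z_t − ∑_{n≤N} ∑_{j=1}^{Γ(n)} ⟨Z_t, e_{n,j}⟩ e_{n,j} ‖² ] = ∑_{n>N} Γ(n) B_n(0); in particular, the truncated expansions converge to Z_t in L²(Ω; H) as N → ∞, uniformly in t ∈ [0,T]. -/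

import Mathlib

open MeasureTheory
open scoped RealInnerProductSpace

/-- Mean-square convergence of the Karhunen–Loève expansion: under the
diagonal covariance hypothesis and the trace condition `∑ n, Γ n * B n 0 < ∞`, the
truncation error satisfies
`E[‖Z t − ∑_{n≤N} ∑_j ⟪Z t, e (n,j)⟫ e (n,j)‖²] = ∑_{n>N} Γ n * B n 0`,
so the truncated expansions converge to `Z t` in `L²(Ω; H)`, uniformly in `t ∈ [0,T]`. -/
theorem karhunen_loeve_truncation_error
    (Ω : Type*) [MeasurableSpace Ω] (P : Measure Ω) [IsProbabilityMeasure P]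
    (H : Type*) [NormedAddCommGroup H] [InnerProductSpace ℝ H] [CompleteSpace H]
    (Γ : ℕ → ℕ) (e : HilbertBasis (Σ n : ℕ, Fin (Γ n)) ℝ H)
    (T : ℝ) (hT : 0 < T) (B : ℕ → ℝ → ℝ)
    (Z : ℝ → Ω → H)
    (hZL2 : ∀ t ∈ Set.Icc (0 : ℝ) T, MemLp (Z t) 2 P)
    (hZcentered : ∀ t ∈ Set.Icc (0 : ℝ) T, ∫ ω, Z t ω ∂P = 0)
    (hcov_summable : ∀ t ∈ Set.Icc (0 : ℝ) T, ∀ s ∈ Set.Icc (0 : ℝ) T, ∀ u v : H,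
      Summable fun n : ℕ =>
        B n |t - s| * ∑ j : Fin (Γ n), ⟪u, e ⟨n, j⟩⟫ * ⟪v, e ⟨n, j⟩⟫)
    (hcov : ∀ t ∈ Set.Icc (0 : ℝ) T, ∀ s ∈ Set.Icc (0 : ℝ) T, ∀ u v : H,
      ∫ ω, ⟪Z t ω, u⟫ * ⟪Z s ω, v⟫ ∂P =
        ∑' n : ℕ, B n |t - s| * ∑ j : Fin (Γ n), ⟪u, e ⟨n, j⟩⟫ * ⟪v, e ⟨n, j⟩⟫)
    (htrace : Summable fun n : ℕ => (Γ n : ℝ) * B n 0) :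
    (∀ t ∈ Set.Icc (0 : ℝ) T, ∀ N : ℕ,
      ∫ ω, ‖Z t ω - ∑ n ∈ Finset.range (N + 1),
          ∑ j : Fin (Γ n), ⟪Z t ω, e ⟨n, j⟩⟫ • e ⟨n, j⟩‖ ^ 2 ∂P =
        ∑' n : ℕ, if N < n then (Γ n : ℝ) * B n 0 else 0) ∧
    (∀ ε > (0 : ℝ), ∃ N₀ : ℕ, ∀ N ≥ N₀, ∀ t ∈ Set.Icc (0 : ℝ) T,
      ∫ ω, ‖Z t ω - ∑ n ∈ Finset.range (N + 1),
          ∑ j : Fin (Γ n), ⟪Z t ω, e ⟨n, j⟩⟫ • e ⟨n, j⟩‖ ^ 2 ∂P < ε) := by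
  classical
  have horth : ∀ p q : (Σ n : ℕ, Fin (Γ n)), ⟪e p, e q⟫ = if p = q then (1:ℝ) else 0 :=
    orthonormal_iff_ite.mp e.orthonormal
  -- Step A: second moment of coefficients
  have stepA : ∀ t ∈ Set.Icc (0 : ℝ) T, ∀ p : (Σ n : ℕ, Fin (Γ n)),
      ∫ ω, ⟪Z t ω, e p⟫ ^ 2 ∂P = B p.1 0 := by
    intro t ht p
    have h := hcov t ht t ht (e p) (e p)
    rw [sub_self, abs_zero] at h
    have hsum : ∀ m : ℕ, (∑ j : Fin (Γ m), ⟪e p, e ⟨m, j⟩⟫ * ⟪e p, e ⟨m, j⟩⟫)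
        = if m = p.1 then (1:ℝ) else 0 := by
      intro m
      rcases p with ⟨n, k⟩
      by_cases hm : m = n
      · subst hm
        simp only [horth, Sigma.mk.inj_iff, heq_eq_eq, true_and]
        simp [Finset.sum_ite_eq]
      · simp only [horth]
        have : ∀ j : Fin (Γ m), ((⟨n, k⟩ : Σ n, Fin (Γ n)) = ⟨m, j⟩) = False := by
          intro j
          simp only [Sigma.mk.inj_iff, eq_iff_iff, iff_false, not_and]
          exact fun h => absurd h.symm hm
        simp [this, hm]
    simp_rw [hsum] at h
    have hfun : (fun m => B m 0 * if m = p.1 then (1:ℝ) else 0)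
        = fun m => if m = p.1 then B p.1 0 else 0 := by
      funext m; by_cases hm : m = p.1 <;> simp [hm]
    rw [hfun, tsum_ite_eq] at h
    simpa [pow_two] using h
  have h0T : (0:ℝ) ∈ Set.Icc (0:ℝ) T := ⟨le_refl _, hT.le⟩
  -- Step B: nonnegativity of B p.1 0
  have stepB : ∀ p : (Σ n : ℕ, Fin (Γ n)), 0 ≤ B p.1 0 := by
    intro p
    rw [← stepA 0 h0T p]
    exact integral_nonneg fun ω => sq_nonneg _
  -- integrability of coefficients squared
  have hint : ∀ t ∈ Set.Icc (0 : ℝ) T, ∀ p : (Σ n : ℕ, Fin (Γ n)),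
      Integrable (fun ω => ⟪Z t ω, e p⟫ ^ 2) P := by
    intro t ht p
    have h1 : MemLp (fun ω => ⟪Z t ω, e p⟫) 2 P := by
      have h2 := MemLp.const_inner (𝕜 := ℝ) (e p) (hZL2 t ht)
      refine h2.congr_norm
        (AEStronglyMeasurable.inner (hZL2 t ht).1 aestronglyMeasurable_const)
        (Filter.Eventually.of_forall fun ω => ?_)
      rw [real_inner_comm]
    exact h1.integrable_sq
  -- summability over the sigma type
  have hsig : Summable fun p : (Σ n : ℕ, Fin (Γ n)) => B p.1 0 := by
    apply (summable_sigma_of_nonneg stepB).mpr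
    constructor
    · intro n; exact (hasSum_fintype _).summable
    · have : (fun n : ℕ => ∑' j : Fin (Γ n), B n 0) = fun n => (Γ n : ℝ) * B n 0 := by
        funext n
        simp [tsum_fintype, Finset.sum_const, nsmul_eq_mul]
      rw [this]; exact htrace
  -- main identity
  have main : ∀ t ∈ Set.Icc (0 : ℝ) T, ∀ N : ℕ,
      ∫ ω, ‖Z t ω - ∑ n ∈ Finset.range (N + 1),
          ∑ j : Fin (Γ n), ⟪Z t ω, e ⟨n, j⟩⟫ • e ⟨n, j⟩‖ ^ 2 ∂P =
        ∑' n : ℕ, if N < n then (Γ n : ℝ) * B n 0 else 0 := by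
    intro t ht N
    set g : (Σ n : ℕ, Fin (Γ n)) → Ω → ℝ :=
      fun p ω => if N < p.1 then ⟪Z t ω, e p⟫ ^ 2 else 0 with hg
    -- pointwise identity
    have hpt : ∀ ω, ‖Z t ω - ∑ n ∈ Finset.range (N + 1),
        ∑ j : Fin (Γ n), ⟪Z t ω, e ⟨n, j⟩⟫ • e ⟨n, j⟩‖ ^ 2 = ∑' p, g p ω := by
      intro ω
      set x := Z t ω - ∑ n ∈ Finset.range (N + 1),
        ∑ j : Fin (Γ n), ⟪Z t ω, e ⟨n, j⟩⟫ • e ⟨n, j⟩ with hx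
      have hxinner : ∀ p : (Σ n : ℕ, Fin (Γ n)),
          ⟪x, e p⟫ = if N < p.1 then ⟪Z t ω, e p⟫ else 0 := by
        intro p
        have hS : ⟪(∑ n ∈ Finset.range (N + 1),
            ∑ j : Fin (Γ n), ⟪Z t ω, e ⟨n, j⟩⟫ • e ⟨n, j⟩), e p⟫
            = if p.1 ≤ N then ⟪Z t ω, e p⟫ else 0 := by
          rw [sum_inner]
          simp_rw [sum_inner, real_inner_smul_left, horth]
          have hss : ∑ n ∈ Finset.range (N+1), ∑ j : Fin (Γ n),
              (⟪Z t ω, e ⟨n, j⟩⟫ * if (⟨n, j⟩ : Σ n, Fin (Γ n)) = p then (1:ℝ) else 0)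
              = ∑ q ∈ (Finset.range (N+1)).sigma (fun _ => Finset.univ),
                (⟪Z t ω, e q⟫ * if q = p then (1:ℝ) else 0) := by
            rw [Finset.sum_sigma]
          rw [hss]
          simp_rw [mul_ite, mul_one, mul_zero]
          rw [Finset.sum_ite_eq' ((Finset.range (N+1)).sigma fun _ => Finset.univ) p
            (fun q => ⟪Z t ω, e q⟫)]
          simp [Finset.mem_sigma, Nat.lt_succ_iff]
        rw [hx, inner_sub_left, hS]
        by_cases hp : p.1 ≤ N
        · simp [hp, not_lt.mpr hp]
        · simp [hp, not_le.mp hp]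
      have hnorm : ‖x‖ ^ 2 = ∑' p, ⟪x, e p⟫ * ⟪e p, x⟫ := by
        rw [e.tsum_inner_mul_inner x x, real_inner_self_eq_norm_sq]
      rw [hnorm]
      refine tsum_congr fun p => ?_
      have hx2 : ⟪e p, x⟫ = ⟪x, e p⟫ := real_inner_comm _ _
      rw [hx2, hxinner]
      by_cases hp : N < p.1 <;> simp [hg, hp, pow_two]
    -- integrability of each g p
    have hgint : ∀ p, Integrable (g p) P := by
      intro p
      by_cases hp : N < p.1
      · simpa [hg, hp] using hint t ht p
      · simpa [hg, hp] using integrable_const (0:ℝ) (μ := P)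
    -- integral of each g p
    have hgval : ∀ p, ∫ ω, g p ω ∂P = if N < p.1 then B p.1 0 else 0 := by
      intro p
      by_cases hp : N < p.1
      · simp only [hg, hp, if_true]; exact stepA t ht p
      · simp [hg, hp]
    -- summability of integrals of norms
    have hgnorm : ∀ p, (∫ ω, ‖g p ω‖ ∂P) = ∫ ω, g p ω ∂P := by
      intro p
      congr 1
      funext ω
      rw [Real.norm_of_nonneg]
      by_cases hp : N < p.1 <;> simp [hg, hp, sq_nonneg]
    have hsum_norm : Summable fun p => ∫ ω, ‖g p ω‖ ∂P := by
      apply Summable.of_nonneg_of_le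
        (fun p => by rw [hgnorm]; rw [hgval]; by_cases hp : N < p.1 <;>
          simp [hp, stepB p])
        (fun p => by rw [hgnorm, hgval]; by_cases hp : N < p.1 <;>
          simp [hp, stepB p]) hsig
    have hswap := integral_tsum_of_summable_integral_norm hgint hsum_norm
    calc ∫ ω, ‖Z t ω - ∑ n ∈ Finset.range (N + 1),
          ∑ j : Fin (Γ n), ⟪Z t ω, e ⟨n, j⟩⟫ • e ⟨n, j⟩‖ ^ 2 ∂P
        = ∫ ω, ∑' p, g p ω ∂P := by
          congr 1; funext ω; exact hpt ω
      _ = ∑' p, ∫ ω, g p ω ∂P := hswap.symm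
      _ = ∑' p : (Σ n : ℕ, Fin (Γ n)), if N < p.1 then B p.1 0 else 0 := by
          congr 1; funext p; exact hgval p
      _ = ∑' n : ℕ, if N < n then (Γ n : ℝ) * B n 0 else 0 := by
          have hs2 : Summable fun p : (Σ n : ℕ, Fin (Γ n)) =>
              if N < p.1 then B p.1 0 else 0 := by
            apply Summable.of_nonneg_of_le
              (fun p => by by_cases hp : N < p.1 <;> simp [hp, stepB p])
              (fun p => by by_cases hp : N < p.1 <;> simp [hp, stepB p]) hsig
          rw [Summable.tsum_sigma hs2]
          congr 1
          funext n
          by_cases hn : N < n <;>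
            simp [hn, tsum_fintype, Finset.sum_const, nsmul_eq_mul]
  refine ⟨main, ?_⟩
  -- uniform convergence
  intro ε hε
  have hnn : ∀ n : ℕ, 0 ≤ (Γ n : ℝ) * B n 0 := by
    intro n
    rcases Nat.eq_zero_or_pos (Γ n) with h | h
    · simp [h]
    · exact mul_nonneg (Nat.cast_nonneg _) (stepB ⟨n, ⟨0, h⟩⟩)
  have htends := htrace.hasSum.tendsto_sum_nat
  rw [Metric.tendsto_atTop] at htends
  obtain ⟨N₀, hN₀⟩ := htends ε hε
  refine ⟨N₀, fun N hN t ht => ?_⟩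
  rw [main t ht N]
  -- tail expression
  have hsum1 : Summable fun n : ℕ => if N < n then (Γ n : ℝ) * B n 0 else 0 :=
    Summable.of_nonneg_of_le
      (fun n => by by_cases hn : N < n <;> simp [hn, hnn n])
      (fun n => by by_cases hn : N < n <;> simp [hn, hnn n]) htrace
  have hsum2 : Summable fun n : ℕ => if N < n then 0 else (Γ n : ℝ) * B n 0 :=
    Summable.of_nonneg_of_le
      (fun n => by by_cases hn : N < n <;> simp [hn, hnn n])
      (fun n => by by_cases hn : N < n <;> simp [hn, hnn n]) htrace
  have hsplit : ∑' n : ℕ, ((Γ n : ℝ) * B n 0)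
      = (∑' n : ℕ, if N < n then (Γ n : ℝ) * B n 0 else 0)
        + ∑' n : ℕ, if N < n then 0 else (Γ n : ℝ) * B n 0 := by
    rw [← Summable.tsum_add hsum1 hsum2]
    congr 1
    funext n
    by_cases hn : N < n <;> simp [hn]
  have htail2 : (∑' n : ℕ, if N < n then 0 else (Γ n : ℝ) * B n 0)
      = ∑ n ∈ Finset.range (N + 1), (Γ n : ℝ) * B n 0 := by
    rw [tsum_eq_sum (s := Finset.range (N+1))]
    · apply Finset.sum_congr rfl
      intro n hn
      rw [Finset.mem_range, Nat.lt_succ_iff] at hn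
      simp [not_lt.mpr hn]
    · intro n hn
      rw [Finset.mem_range, Nat.lt_succ_iff, not_le] at hn
      simp [hn]
  have key : (∑' n : ℕ, if N < n then (Γ n : ℝ) * B n 0 else 0)
      = (∑' n : ℕ, (Γ n : ℝ) * B n 0) - ∑ n ∈ Finset.range (N + 1), (Γ n : ℝ) * B n 0 := by
    rw [hsplit, htail2]; ring
  rw [key]
  have hd := hN₀ (N + 1) (le_trans hN (Nat.le_succ N))
  rw [Real.dist_eq, abs_lt] at hd
  linarith [hd.1, hd.2]
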